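/- In the two-Normal-model setting with g₀ < g₁ and fixed z = √n ȳ, as n → ∞ the posterior probability of M₁ (with equal prior model probabilities) converges to (1 + sqrt(g₁/g₀))⁻¹. -/

import Mathlib

open Filter

/-- With `0 < g₀ < g₁`, equal prior model probabilities, and `z` fixed, the posterior
probability of `M₁`, namely `(1 + BF₀₁(n))⁻¹`, converges to `(1 + √(g₁/g₀))⁻¹`. -/
theorem stmt_1 (g0 g1 z : ℝ) (hg0 : 0 < g0) (hg01 : g0 < g1) :
    Tendsto (fun n : ℕ =>
        (1 + Real.sqrt ((1 + n * g1) / (1 + n * g0)) *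
            Real.exp ((g0 - g1) * n * z ^ 2 / (2 * (1 + n * g0) * (1 + n * g1))))⁻¹)
      atTop (nhds (1 + Real.sqrt (g1 / g0))⁻¹) := by
  have hg1 : 0 < g1 := hg0.trans hg01
  have hinv : Tendsto (fun n : ℕ => ((n : ℝ))⁻¹) atTop (nhds 0) :=
    tendsto_inv_atTop_zero.comp tendsto_natCast_atTop_atTop
  -- ratio tendsto
  have hratio : Tendsto (fun n : ℕ => (1 + (n:ℝ) * g1) / (1 + n * g0)) atTop
      (nhds (g1 / g0)) := by
    have h1 : Tendsto (fun n : ℕ => (((n:ℝ))⁻¹ + g1) / (((n:ℝ))⁻¹ + g0)) atTop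
        (nhds (g1 / g0)) := by
      have := ((hinv.add (tendsto_const_nhds (x := g1))).div (hinv.add (tendsto_const_nhds (x := g0)))
        (by simpa using hg0.ne'))
      simpa [Pi.div_def] using this
    refine h1.congr' ?_
    filter_upwards [eventually_gt_atTop 0] with n hn
    have hn' : (n:ℝ) ≠ 0 := Nat.cast_ne_zero.mpr hn.ne'
    field_simp
  -- exponent tendsto 0
  have hexp : Tendsto (fun n : ℕ =>
      (g0 - g1) * (n:ℝ) * z ^ 2 / (2 * (1 + n * g0) * (1 + n * g1))) atTop (nhds 0) := by
    have hdiv : Tendsto (fun n : ℕ =>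
        ((g0 - g1) * z ^ 2) / (2 * (((n:ℝ))⁻¹ + g0) * (1 + n * g1))) atTop (nhds 0) := by
      apply Tendsto.div_atTop (tendsto_const_nhds)
      have hA : Tendsto (fun n : ℕ => 2 * (((n:ℝ))⁻¹ + g0)) atTop (nhds (2 * g0)) := by
        have := (hinv.add (tendsto_const_nhds (x := g0))).const_mul 2
        simpa using this
      have hB : Tendsto (fun n : ℕ => 1 + (n:ℝ) * g1) atTop atTop := by
        apply tendsto_atTop_add_const_left
        exact Tendsto.atTop_mul_const hg1 tendsto_natCast_atTop_atTop
      exact Tendsto.pos_mul_atTop (by positivity) hA hB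
    refine hdiv.congr' ?_
    filter_upwards [eventually_gt_atTop 0] with n hn
    have hn' : (n:ℝ) ≠ 0 := Nat.cast_ne_zero.mpr hn.ne'
    field_simp
  have hpos : ∀ n : ℕ, (0:ℝ) < 1 + n * g0 := fun n => by positivity
  have hmain : Tendsto (fun n : ℕ =>
      1 + Real.sqrt ((1 + (n:ℝ) * g1) / (1 + n * g0)) *
        Real.exp ((g0 - g1) * n * z ^ 2 / (2 * (1 + n * g0) * (1 + n * g1))))
      atTop (nhds (1 + Real.sqrt (g1 / g0))) := by
    have h1 : Tendsto (fun n : ℕ => Real.sqrt ((1 + (n:ℝ) * g1) / (1 + n * g0))) atTop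
        (nhds (Real.sqrt (g1 / g0))) :=
      (Real.continuous_sqrt.continuousAt.tendsto).comp hratio
    have h2 := (Real.continuous_exp.continuousAt.tendsto).comp hexp
    have := (h1.mul h2).const_add 1
    simpa using this
  have hne : (1 + Real.sqrt (g1 / g0)) ≠ 0 := by positivity
  exact hmain.inv₀ hne
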